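/- For all n ≥ 1, the parity-constrained Hanoi graph P^n contains a Hamiltonian cycle. -/

import Mathlib

/-- Parity constraint on a state: disc `d+1` (labelled `1,…,n`) may not sit on
peg `2` if it is even, nor on peg `1` if it is odd. -/
def pegOK (n : ℕ) (s : Fin n → Fin 4) : Prop :=
  ∀ d : Fin n, (Even ((d : ℕ) + 1) → s d ≠ 2) ∧ (Odd ((d : ℕ) + 1) → s d ≠ 1)

instance (n : ℕ) : DecidablePred (pegOK n) := fun s => by
  unfold pegOK; infer_instance

/-- Vertices of the parity-constrained Hanoi graph `P^n`. -/
abbrev PVertex (n : ℕ) := {s : Fin n → Fin 4 // pegOK n s}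

/-- The parity-constrained four-peg Hanoi graph `P^n`: two states are adjacent iff
they differ in exactly one coordinate `d` (a legal move of disc `d+1`) and no
smaller disc sits on either of the two pegs involved. -/
def PGraph (n : ℕ) : SimpleGraph (PVertex n) where
  Adj s t := ∃ d : Fin n,
    s.1 d ≠ t.1 d ∧ (∀ k, k ≠ d → s.1 k = t.1 k) ∧
    (∀ k, k < d → s.1 k ≠ s.1 d ∧ s.1 k ≠ t.1 d)
  symm := ⟨by
    rintro s t ⟨d, hne, heq, hlt⟩
    refine ⟨d, hne.symm, fun k hk => (heq k hk).symm, fun k hk => ?_⟩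
    have h := hlt k hk
    rw [← heq k (ne_of_lt hk)]
    exact ⟨h.2, h.1⟩⟩
  loopless := ⟨by rintro s ⟨d, hne, -⟩; exact hne rfl⟩

instance (n : ℕ) : DecidableRel (PGraph n).Adj := fun s t =>
  decidable_of_iff (∃ d : Fin n,
    s.1 d ≠ t.1 d ∧ (∀ k, k ≠ d → s.1 k = t.1 k) ∧
    (∀ k, k < d → s.1 k ≠ s.1 d ∧ s.1 k ≠ t.1 d)) Iff.rfl

/-! ### Auxiliary definitions -/

open SimpleGraph

/-- The all-`0` state. -/
def pA (n : ℕ) : PVertex n :=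
  ⟨fun _ => 0, fun _ => ⟨fun _ => by show (0:Fin 4) ≠ 2; decide,
    fun _ => by show (0:Fin 4) ≠ 1; decide⟩⟩

/-- The all-`3` state. -/
def pB (n : ℕ) : PVertex n :=
  ⟨fun _ => 3, fun _ => ⟨fun _ => by show (3:Fin 4) ≠ 2; decide,
    fun _ => by show (3:Fin 4) ≠ 1; decide⟩⟩

/-- The "forced" state: even-index discs at `2`, odd-index at `1`. -/
def pF (n : ℕ) : PVertex n :=
  ⟨fun d => if Even (d : ℕ) then 2 else 1, by
    intro d
    refine ⟨fun h => ?_, fun h => ?_⟩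
    · show (if Even (d : ℕ) then (2:Fin 4) else 1) ≠ 2
      rw [if_neg (Nat.even_add_one.mp h)]; decide
    · show (if Even (d : ℕ) then (2:Fin 4) else 1) ≠ 1
      rw [if_pos (Nat.not_odd_iff_even.mp (Nat.odd_add_one.mp h))]; decide⟩

/-- The validity condition for placing the new largest disc (index `n`) on peg `q`. -/
def QOK (n : ℕ) (q : Fin 4) : Prop :=
  (Even (n + 1) → q ≠ 2) ∧ (Odd (n + 1) → q ≠ 1)

lemma QOK0 (n : ℕ) : QOK n 0 := ⟨fun _ => by show (0:Fin 4) ≠ 2; decide,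
  fun _ => by show (0:Fin 4) ≠ 1; decide⟩
lemma QOK3 (n : ℕ) : QOK n 3 := ⟨fun _ => by show (3:Fin 4) ≠ 2; decide,
  fun _ => by show (3:Fin 4) ≠ 1; decide⟩

/-- The middle peg for the disc of index `n`. -/
def pn (n : ℕ) : Fin 4 := if Even n then 2 else 1

lemma pn_even {n : ℕ} (h : Even n) : pn n = 2 := if_pos h
lemma pn_odd {n : ℕ} (h : Odd n) : pn n = 1 := if_neg (Nat.not_even_iff_odd.mpr h)

lemma QOKp (n : ℕ) : QOK n (pn n) := by
  rcases Nat.even_or_odd n with h | h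
  · rw [pn_even h]
    exact ⟨fun h' => absurd h (Nat.even_add_one.mp h'), fun _ => by decide⟩
  · rw [pn_odd h]
    exact ⟨fun _ => by decide,
      fun h' => absurd (Nat.not_odd_iff_even.mp (Nat.odd_add_one.mp h')) (Nat.not_even_iff_odd.mpr h)⟩

lemma pn_ne0 (n : ℕ) : pn n ≠ 0 := by unfold pn; split <;> decide
lemma pn_ne3 (n : ℕ) : pn n ≠ 3 := by unfold pn; split <;> decide

/-- Extend a state by placing the new largest disc on peg `q`. -/
def extV {n : ℕ} (q : Fin 4) (hq : QOK n q) (s : PVertex n) : PVertex (n + 1) :=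
  ⟨Fin.snoc s.1 q, by
    intro d
    induction d using Fin.lastCases with
    | last => simpa [Fin.snoc_last, Fin.val_last, QOK] using hq
    | cast i => simpa [Fin.snoc_castSucc, Fin.coe_castSucc] using s.2 i⟩

lemma extV_inj {n : ℕ} (q : Fin 4) (hq : QOK n q) :
    Function.Injective (extV q hq) := by
  intro s t h
  apply Subtype.ext
  funext i
  have := congrFun (congrArg Subtype.val h) i.castSucc
  simpa [extV, Fin.snoc_castSucc] using this

lemma lastCoord_extV {n : ℕ} (q : Fin 4) (hq : QOK n q) (s : PVertex n) :
    (extV q hq s).1 (Fin.last n) = q := by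
  simp [extV, Fin.snoc_last]

/-- Extension as a graph homomorphism to the copy of `P^n` inside `P^{n+1}`. -/
def extHom {n : ℕ} (q : Fin 4) (hq : QOK n q) : PGraph n →g PGraph (n + 1) where
  toFun := extV q hq
  map_rel' := by
    rintro s t ⟨d, h1, h2, h3⟩
    refine ⟨d.castSucc, ?_, ?_, ?_⟩
    · simpa [extV, Fin.snoc_castSucc] using h1
    · intro k hk
      induction k using Fin.lastCases with
      | last => simp [extV, Fin.snoc_last]
      | cast i =>
        have : i ≠ d := fun h => hk (by rw [h])
        simpa [extV, Fin.snoc_castSucc] using h2 i this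
    · intro k hk
      induction k using Fin.lastCases with
      | last =>
        exfalso
        rw [Fin.lt_iff_val_lt_val] at hk
        simp only [Fin.val_last, Fin.coe_castSucc] at hk
        omega
      | cast i =>
        have hi : i < d := Fin.castSucc_lt_castSucc_iff.mp hk
        simpa [extV, Fin.snoc_castSucc] using h3 i hi

/-- Moving the largest disc between pegs `q` and `q'`. -/
lemma crossAdj {n : ℕ} (q q' : Fin 4) (hq : QOK n q) (hq' : QOK n q')
    (hne : q ≠ q') (s : PVertex n) (hs : ∀ k, s.1 k ≠ q ∧ s.1 k ≠ q') :
    (PGraph (n + 1)).Adj (extV q hq s) (extV q' hq' s) := by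
  refine ⟨Fin.last n, ?_, ?_, ?_⟩
  · simpa [extV, Fin.snoc_last] using hne
  · intro k hk
    induction k using Fin.lastCases with
    | last => exact absurd rfl hk
    | cast i => simp [extV, Fin.snoc_castSucc]
  · intro k hk
    induction k using Fin.lastCases with
    | last => exact absurd hk (lt_irrefl _)
    | cast i => simpa [extV, Fin.snoc_castSucc, Fin.snoc_last] using hs i

/-- Restriction of a state of `P^{n+1}` to the `n` smallest discs. -/
def restrict {n : ℕ} (v : PVertex (n + 1)) : PVertex n :=
  ⟨fun i => v.1 i.castSucc, fun i => by
    simpa [Fin.coe_castSucc] using v.2 i.castSucc⟩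

lemma extV_restrict' {n : ℕ} (v : PVertex (n + 1)) (hq : QOK n (v.1 (Fin.last n))) :
    extV (v.1 (Fin.last n)) hq (restrict v) = v := by
  apply Subtype.ext
  funext i
  induction i using Fin.lastCases with
  | last => simp [extV, Fin.snoc_last]
  | cast i => simp [extV, restrict, Fin.snoc_castSucc]

lemma extV_restrict {n : ℕ} (v : PVertex (n + 1)) (q : Fin 4) (hq : QOK n q)
    (h : v.1 (Fin.last n) = q) : extV q hq (restrict v) = v := by
  subst h; exact extV_restrict' v hq

/-- In `P^{n+1}`, the largest disc sits on peg `0`, `pn n` or `3`. -/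
lemma last_cases3 {n : ℕ} (v : PVertex (n + 1)) :
    v.1 (Fin.last n) = 0 ∨ v.1 (Fin.last n) = pn n ∨ v.1 (Fin.last n) = 3 := by
  have h := v.2 (Fin.last n)
  rw [Fin.val_last] at h
  have key1 : ∀ x : Fin 4, x ≠ 1 → (x = 0 ∨ x = 2 ∨ x = 3) := by decide
  have key2 : ∀ x : Fin 4, x ≠ 2 → (x = 0 ∨ x = 1 ∨ x = 3) := by decide
  rcases Nat.even_or_odd n with he | ho
  · have h1 : v.1 (Fin.last n) ≠ 1 := h.2 (Nat.odd_add_one.mpr (Nat.not_odd_iff_even.mpr he))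
    rw [pn_even he]
    exact key1 _ h1
  · have h2 : v.1 (Fin.last n) ≠ 2 := h.1 (Nat.even_add_one.mpr (Nat.not_even_iff_odd.mpr ho))
    rw [pn_odd ho]
    exact key2 _ h2

/-- The special states extend compatibly. -/
lemma pA_succ (n : ℕ) : pA (n + 1) = extV 0 (QOK0 n) (pA n) := by
  apply Subtype.ext; funext i
  induction i using Fin.lastCases with
  | last => simp [pA, extV, Fin.snoc_last]
  | cast i => simp [pA, extV, Fin.snoc_castSucc]

lemma pB_succ (n : ℕ) : pB (n + 1) = extV 3 (QOK3 n) (pB n) := by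
  apply Subtype.ext; funext i
  induction i using Fin.lastCases with
  | last => simp [pB, extV, Fin.snoc_last]
  | cast i => simp [pB, extV, Fin.snoc_castSucc]

lemma pF_succ (n : ℕ) : pF (n + 1) = extV (pn n) (QOKp n) (pF n) := by
  apply Subtype.ext; funext i
  induction i using Fin.lastCases with
  | last => simp [pF, pn, extV, Fin.snoc_last, Fin.val_last]
  | cast i => simp [pF, extV, Fin.snoc_castSucc, Fin.coe_castSucc]

lemma pA_vals {n : ℕ} (k : Fin n) : (pA n).1 k = 0 := rfl
lemma pB_vals {n : ℕ} (k : Fin n) : (pB n).1 k = 3 := rfl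
lemma pF_vals {n : ℕ} (k : Fin n) : (pF n).1 k = 2 ∨ (pF n).1 k = 1 := by
  simp only [pF]
  split <;> simp

/-- Our notion of Hamiltonian walk: nodup support covering everything. -/
def Ham {n : ℕ} {a b : PVertex n} (w : (PGraph n).Walk a b) : Prop :=
  w.support.Nodup ∧ ∀ v, v ∈ w.support

lemma Ham.reverse {n : ℕ} {a b : PVertex n} {w : (PGraph n).Walk a b} (h : Ham w) :
    Ham w.reverse := by
  obtain ⟨h1, h2⟩ := h
  constructor
  · simpa [SimpleGraph.Walk.support_reverse] using h1
  · intro v; simpa [SimpleGraph.Walk.support_reverse] using h2 v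

lemma lastCoord_of_mem {n : ℕ} (q : Fin 4) (hq : QOK n q) {a b : PVertex n}
    (w : (PGraph n).Walk a b) {x : PVertex (n + 1)}
    (hx : x ∈ (w.map (extHom q hq)).support) : x.1 (Fin.last n) = q := by
  rw [SimpleGraph.Walk.support_map] at hx
  obtain ⟨y, _, rfl⟩ := List.mem_map.mp hx
  exact lastCoord_extV q hq y

/-- Gluing three Hamiltonian walks of the copies into one of `P^{n+1}`. -/
lemma glueHam {n : ℕ} (q1 q2 q3 : Fin 4) (hq1 : QOK n q1) (hq2 : QOK n q2) (hq3 : QOK n q3)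
    (h12 : q1 ≠ q2) (h13 : q1 ≠ q3) (h23 : q2 ≠ q3)
    (hcover : ∀ v : PVertex (n + 1),
      v.1 (Fin.last n) = q1 ∨ v.1 (Fin.last n) = q2 ∨ v.1 (Fin.last n) = q3)
    {a1 b1 a2 b2 a3 b3 : PVertex n}
    (w1 : (PGraph n).Walk a1 b1) (w2 : (PGraph n).Walk a2 b2) (w3 : (PGraph n).Walk a3 b3)
    (hw1 : Ham w1) (hw2 : Ham w2) (hw3 : Ham w3)
    (e1 : (PGraph (n+1)).Adj (extV q1 hq1 b1) (extV q2 hq2 a2))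
    (e2 : (PGraph (n+1)).Adj (extV q2 hq2 b2) (extV q3 hq3 a3)) :
    Ham ((w1.map (extHom q1 hq1)).append (SimpleGraph.Walk.cons e1
      ((w2.map (extHom q2 hq2)).append (SimpleGraph.Walk.cons e2
        (w3.map (extHom q3 hq3)))))) := by
  have hsup : ((w1.map (extHom q1 hq1)).append (SimpleGraph.Walk.cons e1
      ((w2.map (extHom q2 hq2)).append (SimpleGraph.Walk.cons e2
        (w3.map (extHom q3 hq3)))))).support
      = w1.support.map (extV q1 hq1)
        ++ (w2.support.map (extV q2 hq2) ++ w3.support.map (extV q3 hq3)) := by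
    erw [SimpleGraph.Walk.support_append, SimpleGraph.Walk.support_cons, List.tail_cons,
      SimpleGraph.Walk.support_append, SimpleGraph.Walk.support_cons, List.tail_cons,
      SimpleGraph.Walk.support_map, SimpleGraph.Walk.support_map, SimpleGraph.Walk.support_map]
    rfl
  rw [Ham, hsup]
  constructor
  · refine (List.nodup_append).mpr ⟨hw1.1.map (extV_inj q1 hq1), ?_, ?_⟩
    · refine (List.nodup_append).mpr ⟨hw2.1.map (extV_inj q2 hq2), hw3.1.map (extV_inj q3 hq3), ?_⟩
      intro x hx x' hx' hxx'; subst hxx'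
      obtain ⟨y, _, rfl⟩ := List.mem_map.mp hx
      obtain ⟨z, _, hz⟩ := List.mem_map.mp hx'
      exact h23 ((lastCoord_extV q2 hq2 y).symm.trans (by rw [← hz, lastCoord_extV]))
    · intro x hx x' hx' hxx'; subst hxx'
      obtain ⟨y, _, rfl⟩ := List.mem_map.mp hx
      rcases List.mem_append.mp hx' with h | h
      · obtain ⟨z, _, hz⟩ := List.mem_map.mp h
        exact h12 ((lastCoord_extV q1 hq1 y).symm.trans (by rw [← hz, lastCoord_extV]))
      · obtain ⟨z, _, hz⟩ := List.mem_map.mp h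
        exact h13 ((lastCoord_extV q1 hq1 y).symm.trans (by rw [← hz, lastCoord_extV]))
  · intro v
    rcases hcover v with h | h | h
    · exact List.mem_append.mpr (Or.inl
        (by rw [← extV_restrict v q1 hq1 h]; exact List.mem_map_of_mem (hw1.2 _)))
    · exact List.mem_append.mpr (Or.inr (List.mem_append.mpr (Or.inl
        (by rw [← extV_restrict v q2 hq2 h]; exact List.mem_map_of_mem (hw2.2 _)))))
    · exact List.mem_append.mpr (Or.inr (List.mem_append.mpr (Or.inr
        (by rw [← extV_restrict v q3 hq3 h]; exact List.mem_map_of_mem (hw3.2 _)))))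


lemma extV_ne {n : ℕ} {q q' : Fin 4} (hq : QOK n q) (hq' : QOK n q') (s t : PVertex n)
    (h : q ≠ q') : extV q hq s ≠ extV q' hq' t := fun he =>
  h (by rw [← lastCoord_extV q hq s, he, lastCoord_extV])

section Build

variable (m : ℕ)

lemma hsB0p : ∀ k, (pB m).1 k ≠ (0 : Fin 4) ∧ (pB m).1 k ≠ pn m := fun _ =>
  ⟨by show (3:Fin 4) ≠ 0; decide, Ne.symm (pn_ne3 m)⟩

lemma hsA3p : ∀ k, (pA m).1 k ≠ (3 : Fin 4) ∧ (pA m).1 k ≠ pn m := fun _ =>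
  ⟨by show (0:Fin 4) ≠ 3; decide, Ne.symm (pn_ne0 m)⟩

lemma hsF03 : ∀ k, (pF m).1 k ≠ (0 : Fin 4) ∧ (pF m).1 k ≠ (3 : Fin 4) := fun k => by
  rcases pF_vals k with h | h <;> rw [h] <;> exact ⟨by decide, by decide⟩

/-- edge `(B,0) - (B,p)` -/
lemma eB0p : (PGraph (m+1)).Adj (extV 0 (QOK0 m) (pB m)) (extV (pn m) (QOKp m) (pB m)) :=
  crossAdj _ _ _ _ (Ne.symm (pn_ne0 m)) _ (hsB0p m)

/-- edge `(B,p) - (B,0)` -/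
lemma eBp0 : (PGraph (m+1)).Adj (extV (pn m) (QOKp m) (pB m)) (extV 0 (QOK0 m) (pB m)) :=
  (eB0p m).symm

/-- edge `(A,p) - (A,3)` -/
lemma eAp3 : (PGraph (m+1)).Adj (extV (pn m) (QOKp m) (pA m)) (extV 3 (QOK3 m) (pA m)) :=
  crossAdj _ _ _ _ (pn_ne3 m) _ (fun k => ⟨(hsA3p m k).2, (hsA3p m k).1⟩)

/-- edge `(A,3) - (A,p)` -/
lemma eA3p : (PGraph (m+1)).Adj (extV 3 (QOK3 m) (pA m)) (extV (pn m) (QOKp m) (pA m)) :=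
  (eAp3 m).symm

/-- edge `(F,3) - (F,0)` -/
lemma eF30 : (PGraph (m+1)).Adj (extV 3 (QOK3 m) (pF m)) (extV 0 (QOK0 m) (pF m)) :=
  crossAdj _ _ _ _ (by decide) _ (fun k => ⟨(hsF03 m k).2, (hsF03 m k).1⟩)

/-- edge `(F,0) - (F,3)` -/
lemma eF03 : (PGraph (m+1)).Adj (extV 0 (QOK0 m) (pF m)) (extV 3 (QOK3 m) (pF m)) :=
  (eF30 m).symm

lemma cov_30p : ∀ v : PVertex (m + 1),
    v.1 (Fin.last m) = 3 ∨ v.1 (Fin.last m) = 0 ∨ v.1 (Fin.last m) = pn m := fun v => by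
  rcases last_cases3 v with h | h | h <;> tauto

lemma cov_p30 : ∀ v : PVertex (m + 1),
    v.1 (Fin.last m) = pn m ∨ v.1 (Fin.last m) = 3 ∨ v.1 (Fin.last m) = 0 := fun v => by
  rcases last_cases3 v with h | h | h <;> tauto

lemma cov_3p0 : ∀ v : PVertex (m + 1),
    v.1 (Fin.last m) = 3 ∨ v.1 (Fin.last m) = pn m ∨ v.1 (Fin.last m) = 0 := fun v => by
  rcases last_cases3 v with h | h | h <;> tauto

end Build

lemma adjAF1 : (PGraph 1).Adj (pA 1) (pF 1) := by decide
lemma adjFB1 : (PGraph 1).Adj (pF 1) (pB 1) := by decide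
lemma adjBA1 : (PGraph 1).Adj (pB 1) (pA 1) := by decide
lemma adjAB1 : (PGraph 1).Adj (pA 1) (pB 1) := adjBA1.symm
lemma adjBF1 : (PGraph 1).Adj (pB 1) (pF 1) := adjFB1.symm
lemma adjFA1 : (PGraph 1).Adj (pF 1) (pA 1) := adjAF1.symm

/-- Base Hamiltonian path `A-F-B` in `P¹`. -/
def wAB1 : (PGraph 1).Walk (pA 1) (pB 1) := .cons adjAF1 (.cons adjFB1 .nil)
/-- Base Hamiltonian path `B-A-F` in `P¹`. -/
def wBF1 : (PGraph 1).Walk (pB 1) (pF 1) := .cons adjBA1 (.cons adjAF1 .nil)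
/-- Base Hamiltonian path `F-B-A` in `P¹`. -/
def wFA1 : (PGraph 1).Walk (pF 1) (pA 1) := .cons adjFB1 (.cons adjBA1 .nil)

lemma hamAB1 : Ham wAB1 := ⟨by decide, by decide⟩
lemma hamBF1 : Ham wBF1 := ⟨by decide, by decide⟩
lemma hamFA1 : Ham wFA1 := ⟨by decide, by decide⟩

theorem threePaths : ∀ n : ℕ, 1 ≤ n →
    ∃ (w1 : (PGraph n).Walk (pA n) (pB n)) (w2 : (PGraph n).Walk (pB n) (pF n))
      (w3 : (PGraph n).Walk (pF n) (pA n)), Ham w1 ∧ Ham w2 ∧ Ham w3 := by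
  intro n
  induction n with
  | zero => omega
  | succ m ih =>
    intro _
    by_cases hm : m = 0
    · subst hm
      exact ⟨wAB1, wBF1, wFA1, hamAB1, hamBF1, hamFA1⟩
    · obtain ⟨w1, w2, w3, h1, h2, h3⟩ := ih (by omega)
      rw [pA_succ, pB_succ, pF_succ]
      refine ⟨(w1.map (extHom 0 (QOK0 m))).append (.cons (eB0p m)
          ((w1.reverse.map (extHom (pn m) (QOKp m))).append (.cons (eAp3 m)
            (w1.map (extHom 3 (QOK3 m)))))),
        (w2.map (extHom 3 (QOK3 m))).append (.cons (eF30 m)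
          ((w2.reverse.map (extHom 0 (QOK0 m))).append (.cons (eB0p m)
            (w2.map (extHom (pn m) (QOKp m)))))),
        (w3.map (extHom (pn m) (QOKp m))).append (.cons (eAp3 m)
          ((w3.reverse.map (extHom 3 (QOK3 m))).append (.cons (eF30 m)
            (w3.map (extHom 0 (QOK0 m)))))), ?_, ?_, ?_⟩
      · exact glueHam 0 (pn m) 3 _ _ _ (Ne.symm (pn_ne0 m)) (by decide) (pn_ne3 m)
          last_cases3 _ _ _ h1 h1.reverse h1 (eB0p m) (eAp3 m)
      · exact glueHam 3 0 (pn m) _ _ _ (by decide) (Ne.symm (pn_ne3 m)) (Ne.symm (pn_ne0 m))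
          (cov_30p m) _ _ _ h2 h2.reverse h2 (eF30 m) (eB0p m)
      · exact glueHam (pn m) 3 0 _ _ _ (pn_ne3 m) (pn_ne0 m) (by decide)
          (cov_p30 m) _ _ _ h3 h3.reverse h3 (eAp3 m) (eF30 m)

/-- For all `n ≥ 1`, the parity-constrained Hanoi graph `P^n` has a Hamiltonian
cycle. -/
theorem stmt15 : ∀ n : ℕ, 1 ≤ n →
    ∃ (v : PVertex n) (c : (PGraph n).Walk v v), c.IsHamiltonianCycle := by
  intro n hn
  obtain ⟨m, rfl⟩ : ∃ m, n = m + 1 := ⟨n - 1, by omega⟩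
  by_cases hm : m = 0
  · subst hm
    have hP : (SimpleGraph.Walk.cons adjAB1 (.cons adjBF1 .nil) :
        (PGraph 1).Walk (pA 1) (pF 1)).IsPath := by
      rw [SimpleGraph.Walk.isPath_def]
      decide
    have hne : ¬ s(pF 1, pA 1) ∈ (SimpleGraph.Walk.cons adjAB1 (.cons adjBF1 .nil) :
        (PGraph 1).Walk (pA 1) (pF 1)).edges := by decide
    refine ⟨pF 1, .cons adjFA1 (.cons adjAB1 (.cons adjBF1 .nil)), ?_⟩
    rw [SimpleGraph.Walk.isHamiltonianCycle_iff_isCycle_and_support_count_tail_eq_one]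
    constructor
    · exact SimpleGraph.Path.cons_isCycle ⟨_, hP⟩ adjFA1 hne
    · decide
  · obtain ⟨w1, w2, w3, h1, h2, h3⟩ := threePaths m (by omega)
    set P : (PGraph (m+1)).Walk (extV 3 (QOK3 m) (pF m)) (extV 0 (QOK0 m) (pF m)) :=
      (w3.map (extHom 3 (QOK3 m))).append (.cons (eA3p m)
        ((w1.map (extHom (pn m) (QOKp m))).append (.cons (eBp0 m)
          (w2.map (extHom 0 (QOK0 m)))))) with hPdef
    have hamP : Ham P :=
      glueHam 3 (pn m) 0 _ _ _ (Ne.symm (pn_ne3 m)) (by decide) (pn_ne0 m)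
        (cov_3p0 m) _ _ _ h3 h1 h2 (eA3p m) (eBp0 m)
    have hP : P.IsPath := (SimpleGraph.Walk.isPath_def P).mpr hamP.1
    have hnotmem : ¬ s(extV 0 (QOK0 m) (pF m), extV 3 (QOK3 m) (pF m)) ∈ P.edges := by
      intro h
      erw [hPdef, SimpleGraph.Walk.edges_append, SimpleGraph.Walk.edges_cons,
        SimpleGraph.Walk.edges_append, SimpleGraph.Walk.edges_cons] at h
      rcases List.mem_append.mp h with h | h
      · have := SimpleGraph.Walk.fst_mem_support_of_mem_edges _ h
        have h3' := lastCoord_of_mem 3 (QOK3 m) w3 this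
        rw [lastCoord_extV] at h3'
        exact absurd h3' (by decide)
      rcases List.mem_cons.mp h with h | h
      · rcases Sym2.eq_iff.mp h with ⟨ha, _⟩ | ⟨ha, _⟩
        · exact extV_ne (QOK0 m) (QOK3 m) _ _ (by decide) ha
        · exact extV_ne (QOK0 m) (QOKp m) _ _ (Ne.symm (pn_ne0 m)) ha
      rcases List.mem_append.mp h with h | h
      · have := SimpleGraph.Walk.fst_mem_support_of_mem_edges _ h
        have h3' := lastCoord_of_mem (pn m) (QOKp m) w1 this
        rw [lastCoord_extV] at h3'
        exact absurd h3' (Ne.symm (pn_ne0 m))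
      rcases List.mem_cons.mp h with h | h
      · rcases Sym2.eq_iff.mp h with ⟨ha, _⟩ | ⟨_, hb⟩
        · exact extV_ne (QOK0 m) (QOKp m) _ _ (Ne.symm (pn_ne0 m)) ha
        · exact extV_ne (QOKp m) (QOK3 m) _ _ (pn_ne3 m) hb.symm
      · have := SimpleGraph.Walk.snd_mem_support_of_mem_edges _ h
        have h3' := lastCoord_of_mem 0 (QOK0 m) w2 this
        rw [lastCoord_extV] at h3'
        exact absurd h3' (by decide)
    refine ⟨extV 0 (QOK0 m) (pF m), .cons (eF03 m) P, ?_⟩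
    rw [SimpleGraph.Walk.isHamiltonianCycle_iff_isCycle_and_support_count_tail_eq_one]
    constructor
    · exact SimpleGraph.Path.cons_isCycle ⟨P, hP⟩ (eF03 m) hnotmem
    · intro a
      rw [SimpleGraph.Walk.support_cons, List.tail_cons]
      exact @List.count_eq_one_of_mem _ instBEqOfDecidableEq _ _ _ hamP.1 (hamP.2 a)
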